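/- Under the hypotheses of the previous statement with U, U', V, V' unitary, the relative modular operator satisfies Δ_{Ψ|Φ} = V U' Δ_Ω (U')† V†, and consequently Δ_{Ψ|Φ}^r = V U' Δ_Ω^r (U')† V† for all r ≥ 0. -/

import Mathlib

/-- For unitary excitations `Ψ = U U' Ω`, `Φ = V V' Ω` with unitary `U, V ∈ 𝔄` and
`U', V' ∈ 𝔄'`, the relative modular operator satisfies
`Δ_{Ψ|Φ} = V U' Δ_Ω (U')† V†`, and consequently
`Δ_{Ψ|Φ}^r = V U' Δ_Ω^r (U')† V†` for all `r ≥ 0` (spectral calculus). -/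
theorem relative_modular_operator_formula {H : Type*} [NormedAddCommGroup H]
    [InnerProductSpace ℂ H] [CompleteSpace H]
    (A : VonNeumannAlgebra H) (Ω Ψ Φ : H)
    (U V U' V' : H →L[ℂ] H)
    (hU : U ∈ A) (hV : V ∈ A) (hU' : U' ∈ A.commutant) (hV' : V' ∈ A.commutant)
    (hUu : U ∈ unitary (H →L[ℂ] H)) (hVu : V ∈ unitary (H →L[ℂ] H))
    (hU'u : U' ∈ unitary (H →L[ℂ] H)) (hV'u : V' ∈ unitary (H →L[ℂ] H))
    (hΨ : Ψ = U (U' Ω)) (hΦ : Φ = V (V' Ω))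
    (hcycΩ : Dense {x : H | ∃ a ∈ A, a Ω = x})
    (hsepΩ : ∀ a ∈ A, a Ω = 0 → a = 0)
    (hcycΨ : Dense {x : H | ∃ a ∈ A, a Ψ = x})
    (hsepΨ : ∀ a ∈ A, a Ψ = 0 → a = 0)
    (hcycΦ : Dense {x : H | ∃ a ∈ A, a Φ = x})
    (hsepΦ : ∀ a ∈ A, a Φ = 0 → a = 0)
    -- Tomita operators (antilinear, continuous for simplicity of the model):
    (SΩ Srel : H → H)
    (hSΩ : ∀ a ∈ A, SΩ (a Ω) = (star a) Ω)
    (hSrel : ∀ a ∈ A, Srel (a Ψ) = (star a) Φ)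
    -- modular operators `Δ = S† S`, characterized by `⟪Δ η, ξ⟫ = ⟪S ξ, S η⟫`:
    (ΔΩ Δrel : H →L[ℂ] H)
    (hΔΩ : ∀ ξ η : H, (inner ℂ (ΔΩ η) ξ : ℂ) = inner ℂ (SΩ ξ) (SΩ η))
    (hΔrel : ∀ ξ η : H, (inner ℂ (Δrel η) ξ : ℂ) = inner ℂ (Srel ξ) (Srel η)) :
    Δrel = V * U' * ΔΩ * star U' * star V ∧
    ∀ r : ℝ, 0 ≤ r →
      cfc (fun x : ℝ => x ^ r) Δrel
        = V * U' * cfc (fun x : ℝ => x ^ r) ΔΩ * star U' * star V := by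
  set W : H →L[ℂ] H := V * U' with hWdef
  have hWu : W ∈ unitary (H →L[ℂ] H) := mul_mem hVu hU'u
  have hW1 : star W * W = 1 := (Unitary.mem_iff.mp hWu).1
  have hW2 : W * star W = 1 := (Unitary.mem_iff.mp hWu).2
  have hU2 : U * star U = 1 := (Unitary.mem_iff.mp hUu).2
  have hU'1 : star U' * U' = 1 := (Unitary.mem_iff.mp hU'u).1
  have comm : ∀ a ∈ A, ∀ z ∈ A.commutant, ∀ x : H, z (a x) = a (z x) := by
    intro a ha z hz x
    have h := VonNeumannAlgebra.mem_commutant_iff.mp hz a ha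
    have := congrArg (fun T : H →L[ℂ] H => T x) h.symm
    simpa using this
  have hVs : star V ∈ A := star_mem hV
  have hU's : star U' ∈ A.commutant := star_mem hU'
  -- key pointwise formula for `Srel`
  have key : ∀ a ∈ A, Srel (a Ψ) = U (V' (SΩ ((star W) (a Ψ)))) := by
    intro a ha
    set b : H →L[ℂ] H := star V * a * U with hbdef
    have hb : b ∈ A := mul_mem (mul_mem hVs ha) hU
    have h1 : (star W) (a Ψ) = b Ω := by
      have hsw : star W = star U' * star V := by rw [hWdef, star_mul]
      rw [hΨ, hsw]
      calc (star U' * star V) (a (U (U' Ω)))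
          = b ((star U') (U' Ω)) := by
            rw [← comm b hb (star U') hU's (U' Ω)]
            simp [ContinuousLinearMap.mul_apply, hbdef]
        _ = b Ω := by
            have h2 : (star U') (U' Ω) = Ω := by
              have := congrArg (fun T : H →L[ℂ] H => T Ω) hU'1
              simpa using this
            rw [h2]
    rw [h1, hSΩ b hb, hSrel a ha]
    have h2 : V' ((star b) Ω) = (star b) (V' Ω) := comm (star b) (star_mem hb) V' hV' Ω
    have hsb : star b = star U * (star a * V) := by simp [hbdef, star_mul, mul_assoc]
    rw [h2, hΦ, hsb]
    have h3 : U * (star U * (star a * V)) = star a * V := by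
      rw [← mul_assoc, hU2, one_mul]
    have := congrArg (fun T : H →L[ℂ] H => T (V' Ω)) h3
    simpa [ContinuousLinearMap.mul_apply] using this.symm
  -- unitaries preserve inner products
  have unit_inner : ∀ T : H →L[ℂ] H, T ∈ unitary (H →L[ℂ] H) → ∀ x y : H,
      (inner ℂ (T x) (T y) : ℂ) = inner ℂ x y := by
    intro T hT x y
    rw [← ContinuousLinearMap.adjoint_inner_right]
    congr 1
    have h := congrArg (fun S : H →L[ℂ] H => S y) (Unitary.mem_iff.mp hT).1
    simpa [ContinuousLinearMap.star_eq_adjoint, ContinuousLinearMap.mul_apply] using h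
  have hadj : ∀ (T : H →L[ℂ] H) (x y : H), (inner ℂ x ((star T) y) : ℂ) = inner ℂ (T x) y := by
    intro T x y
    rw [ContinuousLinearMap.star_eq_adjoint]
    exact ContinuousLinearMap.adjoint_inner_right T x y
  -- agreement of the sesquilinear forms on the dense set of `A`-excitations of `Ψ`
  have hDrel : ∀ ξ ∈ {x : H | ∃ a ∈ A, a Ψ = x}, ∀ η ∈ {x : H | ∃ a ∈ A, a Ψ = x},
      (inner ℂ (Δrel η) ξ : ℂ) = inner ℂ ((W * ΔΩ * star W) η) ξ := by
    rintro ξ ⟨a, ha, rfl⟩ η ⟨b, hb, rfl⟩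
    rw [hΔrel, key a ha, key b hb, unit_inner U hUu, unit_inner V' hV'u, ← hΔΩ, hadj W]
    simp [ContinuousLinearMap.mul_apply]
  have hmain : Δrel = W * ΔΩ * star W := by
    have hptw : ∀ η ∈ {x : H | ∃ a ∈ A, a Ψ = x}, Δrel η = (W * ΔΩ * star W) η := by
      intro η hη
      set v : H := Δrel η - (W * ΔΩ * star W) η with hv
      have hz : ∀ ξ ∈ {x : H | ∃ a ∈ A, a Ψ = x}, (inner ℂ v ξ : ℂ) = 0 := by
        intro ξ hξ
        rw [hv, inner_sub_left, hDrel ξ hξ η hη, sub_self]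
      have hfun : (fun ξ : H => (inner ℂ v ξ : ℂ)) = fun _ => 0 :=
        Continuous.ext_on hcycΨ (continuous_const.inner continuous_id) continuous_const hz
      have h0 : (inner ℂ v v : ℂ) = 0 := congrFun hfun v
      exact sub_eq_zero.mp (inner_self_eq_zero.mp h0)
    exact DFunLike.coe_injective
      (Continuous.ext_on hcycΨ Δrel.continuous (W * ΔΩ * star W).continuous hptw)
  have hsaΩ : IsSelfAdjoint ΔΩ := by
    rw [ContinuousLinearMap.isSelfAdjoint_iff_isSymmetric]
    intro x y
    show (inner ℂ (ΔΩ x) y : ℂ) = inner ℂ x (ΔΩ y)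
    calc (inner ℂ (ΔΩ x) y : ℂ) = inner ℂ (SΩ y) (SΩ x) := hΔΩ y x
      _ = starRingEnd ℂ (inner ℂ (SΩ x) (SΩ y)) := (inner_conj_symm _ _).symm
      _ = starRingEnd ℂ (inner ℂ (ΔΩ y) x) := by rw [hΔΩ x y]
      _ = inner ℂ x (ΔΩ y) := inner_conj_symm _ _
  have hsaRel : IsSelfAdjoint Δrel := hmain ▸ hsaΩ.conjugate W
  -- the conjugation star-algebra homomorphism
  let φ : (H →L[ℂ] H) →⋆ₐ[ℂ] (H →L[ℂ] H) :=
    { toFun := fun x => W * x * star W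
      map_one' := by show W * 1 * star W = 1; rw [mul_one, hW2]
      map_mul' := fun x y => by
        show W * (x * y) * star W = W * x * star W * (W * y * star W)
        calc W * (x * y) * star W = W * x * (star W * W) * y * star W := by
              rw [hW1]; noncomm_ring
          _ = W * x * star W * (W * y * star W) := by noncomm_ring
      map_zero' := by show W * 0 * star W = 0; rw [mul_zero, zero_mul]
      map_add' := fun x y => by
        show W * (x + y) * star W = W * x * star W + W * y * star W
        noncomm_ring
      commutes' := fun c => by
        show W * (algebraMap ℂ _) c * star W = (algebraMap ℂ _) c
        simp [Algebra.algebraMap_eq_smul_one, mul_smul_comm, smul_mul_assoc, hW2]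
      map_star' := fun x => by
        show W * star x * star W = star (W * x * star W)
        simp [star_mul, mul_assoc] }
  have hφΔ : φ ΔΩ = Δrel := hmain.symm
  have hφcont : Continuous φ := by
    show Continuous fun x : H →L[ℂ] H => W * x * star W
    exact (continuous_const.mul continuous_id).mul continuous_const
  refine ⟨by rw [hmain, hWdef, star_mul]; noncomm_ring, ?_⟩
  intro r hr
  have hcont : ContinuousOn (fun x : ℝ => x ^ r) (spectrum ℝ ΔΩ) := fun x _ =>
    (Real.continuousAt_rpow_const x r (Or.inr hr)).continuousWithinAt
  have hmap := StarAlgHom.map_cfc φ (fun x : ℝ => x ^ r) ΔΩ hcont hφcont hsaΩ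
    (hφΔ ▸ hsaRel)
  rw [hφΔ] at hmap
  rw [← hmap]
  show W * cfc (fun x : ℝ => x ^ r) ΔΩ * star W = _
  rw [hWdef, star_mul]; noncomm_ring
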